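/- Let A ∈ ℝ^{n×n}. The discrete-time LTI system x(k+1) = A x(k) is convergent if and only if there exist a symmetric positive definite matrix Q ∈ ℝ^{n×n} and a symmetric positive semidefinite matrix P ∈ ℝ^{n×n} with rank(P) = n − dim ker(A − I), such that AᵀPA − P + (A − I)ᵀ Q (A − I) is negative semidefinite. -/

import Mathlib

open Matrix Filter

/-- The DT LTI system `x(k+1) = A x(k)` is convergent: every trajectory `A^k x₀` has a limit. -/
def DTConvergent {n : ℕ} (A : Matrix (Fin n) (Fin n) ℝ) : Prop :=
  ∀ x0 : Fin n → ℝ, ∃ xbar : Fin n → ℝ,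
    Tendsto (fun k : ℕ => (A ^ k) *ᵥ x0) atTop (nhds xbar)

/-- The DT system `x(k+1) = B x(k)` is marginally stable. -/
def DTMarginallyStable {n : ℕ} (B : Matrix (Fin n) (Fin n) ℝ) : Prop :=
  ∃ C : ℝ, 0 ≤ C ∧ ∀ (k : ℕ) (x : Fin n → ℝ), ‖(B ^ k) *ᵥ x‖ ≤ C * ‖x‖

/-- The CT LTI system `ẋ = A x` is convergent: every trajectory `exp(tA) x₀` has a limit. -/
noncomputable def CTConvergent {n : ℕ} (A : Matrix (Fin n) (Fin n) ℝ) : Prop :=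
  ∀ x0 : Fin n → ℝ, ∃ xbar : Fin n → ℝ,
    Tendsto (fun t : ℝ => (NormedSpace.exp (t • A)) *ᵥ x0) atTop (nhds xbar)

/-- The CT system `ẋ = B x` is marginally stable. -/
noncomputable def CTMarginallyStable {n : ℕ} (B : Matrix (Fin n) (Fin n) ℝ) : Prop :=
  ∃ C : ℝ, 0 ≤ C ∧ ∀ t : ℝ, 0 ≤ t → ∀ x : Fin n → ℝ,
    ‖(NormedSpace.exp (t • B)) *ᵥ x‖ ≤ C * ‖x‖

section DTProofAux
open scoped Matrix.Norms.L2Operator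

variable {n : ℕ}

lemma dot_nonneg' (v : Fin n → ℝ) : 0 ≤ v ⬝ᵥ v :=
  Finset.sum_nonneg fun i _ => mul_self_nonneg _

lemma dot_eq_normE_sq (v : Fin n → ℝ) :
    v ⬝ᵥ v = ‖(WithLp.equiv 2 (Fin n → ℝ)).symm v‖ ^ 2 := by
  rw [EuclideanSpace.norm_eq, Real.sq_sqrt]
  · simp [dotProduct, sq_abs, pow_two]
  · positivity

lemma dot_mulVec_le (X : Matrix (Fin n) (Fin n) ℝ) (y : Fin n → ℝ) :
    (X *ᵥ y) ⬝ᵥ (X *ᵥ y) ≤ ‖X‖ ^ 2 * (y ⬝ᵥ y) := by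
  have h := X.l2_opNorm_mulVec ((WithLp.equiv 2 (Fin n → ℝ)).symm y)
  rw [dot_eq_normE_sq, dot_eq_normE_sq]
  have h2 : ‖(EuclideanSpace.equiv (Fin n) ℝ).symm (X *ᵥ y)‖ ≤ ‖X‖ * ‖(WithLp.equiv 2 (Fin n → ℝ)).symm y‖ := h
  calc ‖(WithLp.equiv 2 (Fin n → ℝ)).symm (X *ᵥ y)‖ ^ 2
      ≤ (‖X‖ * ‖(WithLp.equiv 2 (Fin n → ℝ)).symm y‖) ^ 2 := by
        apply pow_le_pow_left₀ (norm_nonneg _) h2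
    _ = ‖X‖ ^ 2 * ‖(WithLp.equiv 2 (Fin n → ℝ)).symm y‖ ^ 2 := by ring

lemma pi_norm_le_sqrt_dot (v : Fin n → ℝ) : ‖v‖ ≤ Real.sqrt (v ⬝ᵥ v) := by
  rw [pi_norm_le_iff_of_nonneg (Real.sqrt_nonneg _)]
  intro i
  rw [show ‖v i‖ = Real.sqrt ((v i)^2) by rw [Real.sqrt_sq_eq_abs]; rfl]
  apply Real.sqrt_le_sqrt
  have : (v i)^2 ≤ ∑ j, v j * v j := by
    rw [pow_two]
    exact Finset.single_le_sum (f := fun j => v j * v j)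
      (fun j _ => mul_self_nonneg _) (Finset.mem_univ i)
  simpa [dotProduct] using this

lemma norm_sq_le_dot (v : Fin n → ℝ) : ‖v‖ ^ 2 ≤ v ⬝ᵥ v := by
  have h : ‖v‖ ≤ Real.sqrt (v ⬝ᵥ v) := pi_norm_le_sqrt_dot v
  calc ‖v‖ ^ 2 ≤ Real.sqrt (v ⬝ᵥ v) ^ 2 := pow_le_pow_left₀ (norm_nonneg _) h 2
    _ = v ⬝ᵥ v := Real.sq_sqrt (dot_nonneg' v)

lemma dot_le_card_norm (v : Fin n → ℝ) : v ⬝ᵥ v ≤ n * ‖v‖ ^ 2 := by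
  have : v ⬝ᵥ v ≤ ∑ _i : Fin n, ‖v‖ ^ 2 := by
    apply Finset.sum_le_sum
    intro i _
    have := norm_le_pi_norm v i
    calc v i * v i = ‖v i‖^2 := by rw [pow_two]; simp [Real.norm_eq_abs, abs_mul_abs_self]
      _ ≤ ‖v‖^2 := pow_le_pow_left₀ (norm_nonneg _) this 2
  simpa using this

lemma lowbound (f : (Fin n → ℝ) →ₗ[ℝ] (Fin n → ℝ)) (W : Submodule ℝ (Fin n → ℝ))
    (hinj : ∀ w ∈ W, f w = 0 → w = 0) :
    ∃ δ > 0, ∀ w ∈ W, δ * (w ⬝ᵥ w) ≤ (f w) ⬝ᵥ (f w) := by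
  set g : W →ₗ[ℝ] (Fin n → ℝ) := f.comp W.subtype with hg
  have hginj : Function.Injective g := by
    intro a b hab
    have : f ((a : Fin n → ℝ) - b) = 0 := by
      simp only [hg, LinearMap.comp_apply, Submodule.subtype_apply] at hab
      rw [map_sub, hab, sub_self]
    have := hinj _ (Submodule.sub_mem W a.2 b.2) this
    exact Subtype.ext (by rwa [sub_eq_zero] at this)
  let e := LinearEquiv.ofInjective g hginj
  let esymm : (LinearMap.range g) →ₗ[ℝ] W := e.symm.toLinearMap
  have hcont : Continuous esymm := esymm.continuous_of_finiteDimensional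
  let ecl : (LinearMap.range g) →L[ℝ] W := ⟨esymm, hcont⟩
  set C : ℝ := ‖ecl‖ with hC
  have hCn : 0 ≤ C := hC ▸ ecl.opNorm_nonneg
  refine ⟨((n : ℝ) * C ^ 2 + 1)⁻¹, by positivity, ?_⟩
  intro w hw
  have hb : ‖w‖ ≤ C * ‖f w‖ := by
    have : (⟨w, hw⟩ : W) = ecl ⟨g ⟨w, hw⟩, LinearMap.mem_range_self g _⟩ := by
      show _ = e.symm ⟨g ⟨w, hw⟩, _⟩
      rw [show (⟨g ⟨w, hw⟩, LinearMap.mem_range_self g _⟩ : LinearMap.range g) = e ⟨w, hw⟩ from rfl]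
      simp
    calc ‖w‖ = ‖(⟨w, hw⟩ : W)‖ := rfl
      _ = ‖ecl ⟨g ⟨w, hw⟩, LinearMap.mem_range_self g _⟩‖ := by rw [← this]
      _ ≤ C * ‖(⟨g ⟨w, hw⟩, LinearMap.mem_range_self g _⟩ : LinearMap.range g)‖ := ecl.le_opNorm _
      _ = C * ‖f w‖ := rfl
  have h1 : w ⬝ᵥ w ≤ (n : ℝ) * C^2 * (f w ⬝ᵥ f w) := by
    calc w ⬝ᵥ w ≤ n * ‖w‖^2 := dot_le_card_norm w
      _ ≤ n * (C * ‖f w‖)^2 := by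
          apply mul_le_mul_of_nonneg_left _ (Nat.cast_nonneg n)
          exact pow_le_pow_left₀ (norm_nonneg _) hb 2
      _ = (n : ℝ) * C^2 * ‖f w‖^2 := by ring
      _ ≤ (n : ℝ) * C^2 * (f w ⬝ᵥ f w) := by
          apply mul_le_mul_of_nonneg_left (norm_sq_le_dot _) (by positivity)
  rw [inv_mul_le_iff₀ (by positivity)]
  calc w ⬝ᵥ w ≤ (n : ℝ) * C^2 * (f w ⬝ᵥ f w) := h1
    _ ≤ ((n : ℝ) * C^2 + 1) * (f w ⬝ᵥ f w) := by
        apply mul_le_mul_of_nonneg_right _ (dot_nonneg' _)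
        linarith

lemma posdef_lower {Q : Matrix (Fin n) (Fin n) ℝ} (hQ : Q.PosDef) :
    ∃ c > 0, ∀ y : Fin n → ℝ, c * (y ⬝ᵥ y) ≤ y ⬝ᵥ (Q *ᵥ y) := by
  open scoped MatrixOrder in
  obtain ⟨R, hRR, hRherm⟩ : ∃ R : Matrix (Fin n) (Fin n) ℝ, R * R = Q ∧ Rᵀ = R :=
    ⟨CFC.sqrt Q, CFC.sqrt_mul_sqrt_self Q (nonneg_iff_posSemidef.2 hQ.posSemidef), by
      have := (nonneg_iff_posSemidef.1 (CFC.sqrt_nonneg Q)).1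
      rwa [Matrix.IsHermitian, conjTranspose_eq_transpose_of_trivial] at this⟩
  have hform : ∀ y : Fin n → ℝ, y ⬝ᵥ (Q *ᵥ y) = (R *ᵥ y) ⬝ᵥ (R *ᵥ y) := by
    intro y
    rw [← hRR, ← Matrix.mulVec_mulVec, Matrix.dotProduct_mulVec (v := y)]
    conv_lhs => rw [← hRherm, Matrix.vecMul_transpose]
    rw [hRherm]
  obtain ⟨δ, hδ, hbd⟩ := lowbound R.mulVecLin ⊤ (fun w _ hw => by
    have h0 : Q *ᵥ w = 0 := by
      rw [← hRR, ← Matrix.mulVec_mulVec]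
      rw [Matrix.mulVecLin_apply] at hw
      rw [hw, Matrix.mulVec_zero]
    by_contra hne
    have := hQ.dotProduct_mulVec_pos hne
    rw [show star w = w from star_trivial w, h0] at this
    simp at this)
  exact ⟨δ, hδ, fun y => by
    rw [hform y]
    simpa using hbd y trivial⟩

lemma summable_geom_div {c' : ℝ} (h0 : 0 ≤ c') (h1 : c' < 1) (m : ℕ) (hm : 0 < m) :
    Summable fun k : ℕ => c' ^ (k / m) := by
  haveI : NeZero m := ⟨hm.ne'⟩
  have hsum : Summable fun p : ℕ × Fin m => c' ^ p.1 * (fun _ : Fin m => (1:ℝ)) p.2 :=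
    Summable.mul_of_nonneg (f := fun k : ℕ => c' ^ k) (g := fun _ : Fin m => (1:ℝ))
      (summable_geometric_of_lt_one h0 h1) .of_finite
      (fun k => by positivity) (fun k => by norm_num)
  have := (Nat.divModEquiv m).summable_iff (f := fun p : ℕ × Fin m => c' ^ p.1 * (fun _ : Fin m => (1:ℝ)) p.2)
  rw [← this] at hsum
  convert hsum using 2 with k
  simp [Nat.divModEquiv]


lemma exists_lim_matrix (A : Matrix (Fin n) (Fin n) ℝ) (h : DTConvergent A) :
    ∃ L : Matrix (Fin n) (Fin n) ℝ, Tendsto (fun k : ℕ => A ^ k) atTop (nhds L) := by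
  choose xbar hx using h
  classical
  refine ⟨Matrix.of (fun i j => xbar (Pi.single j 1) i), ?_⟩
  refine tendsto_pi_nhds.2 ?_
  intro i
  rw [tendsto_pi_nhds]
  intro j
  have h1 := hx (Pi.single j 1)
  rw [tendsto_pi_nhds] at h1
  have h2 := h1 i
  convert h2 using 2 with k
  all_goals simp [Matrix.mulVec_single, Matrix.of_apply]

section Forward
variable (A : Matrix (Fin n) (Fin n) ℝ)

lemma limit_facts {L : Matrix (Fin n) (Fin n) ℝ}
    (hL : Tendsto (fun k : ℕ => A ^ k) atTop (nhds L)) :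
    A * L = L ∧ L * A = L ∧ L * L = L := by
  have hAL : A * L = L := by
    have h1 : Tendsto (fun k : ℕ => A * A ^ k) atTop (nhds (A * L)) :=
      tendsto_const_nhds.mul hL
    have h2 : Tendsto (fun k : ℕ => A * A ^ k) atTop (nhds L) := by
      have := hL.comp (tendsto_add_atTop_nat 1)
      simpa [Function.comp_def, pow_succ'] using this
    exact tendsto_nhds_unique h1 h2
  have hLA : L * A = L := by
    have h1 : Tendsto (fun k : ℕ => A ^ k * A) atTop (nhds (L * A)) :=
      hL.mul tendsto_const_nhds
    have h2 : Tendsto (fun k : ℕ => A ^ k * A) atTop (nhds L) := by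
      have := hL.comp (tendsto_add_atTop_nat 1)
      simpa [Function.comp_def, pow_succ] using this
    exact tendsto_nhds_unique h1 h2
  have hpowL : ∀ k : ℕ, A ^ k * L = L := by
    intro k; induction k with
    | zero => simp
    | succ k ih => rw [pow_succ, mul_assoc, hAL, ih]
  have hLL : L * L = L := by
    have h1 : Tendsto (fun k : ℕ => A ^ k * L) atTop (nhds (L * L)) :=
      hL.mul tendsto_const_nhds
    have h2 : Tendsto (fun k : ℕ => A ^ k * L) atTop (nhds L) := by
      simp only [hpowL]; exact tendsto_const_nhds
    exact tendsto_nhds_unique h1 h2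
  exact ⟨hAL, hLA, hLL⟩


lemma map_tsum_matrix {V : Type*} [NormedAddCommGroup V] [NormedSpace ℝ V]
    (F : Matrix (Fin n) (Fin n) ℝ →ₗ[ℝ] V) {g : ℕ → Matrix (Fin n) (Fin n) ℝ} (hg : Summable g) :
    F (∑' k, g k) = ∑' k, F (g k) ∧ Summable fun k => F (g k) := by
  have hc : Continuous F := F.continuous_of_finiteDimensional
  have h2 := hg.hasSum.mapL (⟨F, hc⟩ : Matrix (Fin n) (Fin n) ℝ →L[ℝ] V)
  exact ⟨(h2.tsum_eq).symm, h2.summable⟩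

/-- the linear map `X ↦ X *ᵥ x`. -/
def mvLM (x : Fin n → ℝ) : Matrix (Fin n) (Fin n) ℝ →ₗ[ℝ] (Fin n → ℝ) where
  toFun X := X *ᵥ x
  map_add' X Y := Matrix.add_mulVec X Y x
  map_smul' c X := Matrix.smul_mulVec c X x

/-- the linear map `X ↦ x ⬝ᵥ X *ᵥ x`. -/
def formLM (x : Fin n → ℝ) : Matrix (Fin n) (Fin n) ℝ →ₗ[ℝ] ℝ where
  toFun X := x ⬝ᵥ (X *ᵥ x)
  map_add' X Y := by simp only [Matrix.add_mulVec, dotProduct_add]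
  map_smul' c X := by simp only [Matrix.smul_mulVec, dotProduct_smul, RingHom.id_apply,
    smul_eq_mul]

/-- the linear map `X ↦ Aᵀ * X * A`. -/
def conjLM (A : Matrix (Fin n) (Fin n) ℝ) :
    Matrix (Fin n) (Fin n) ℝ →ₗ[ℝ] Matrix (Fin n) (Fin n) ℝ where
  toFun X := Aᵀ * X * A
  map_add' X Y := by noncomm_ring
  map_smul' c X := by simp [Matrix.smul_mul, Matrix.mul_smul]


set_option maxHeartbeats 1000000 in
lemma forward_dir (h : DTConvergent A) :
    ∃ (Q P : Matrix (Fin n) (Fin n) ℝ), Q.PosDef ∧ P.PosSemidef ∧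
      P.rank = n - Module.finrank ℝ (LinearMap.ker (A - 1).mulVecLin) ∧
      (-(Aᵀ * P * A - P + (A - 1)ᵀ * Q * (A - 1))).PosSemidef := by
  classical
  obtain ⟨L, hL⟩ := exists_lim_matrix A h
  obtain ⟨hAL, hLA, hLL⟩ := limit_facts A hL
  have hpowL : ∀ k : ℕ, A ^ k * L = L := by
    intro k; induction k with
    | zero => simp
    | succ k ih => rw [pow_succ, mul_assoc, hAL, ih]
  have hLpow : ∀ k : ℕ, L * A ^ k = L := by
    intro k; induction k with
    | zero => simp
    | succ k ih => rw [pow_succ, ← mul_assoc, ih, hLA]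
  set B : Matrix (Fin n) (Fin n) ℝ := A - L with hB
  set M : Matrix (Fin n) (Fin n) ℝ := 1 - L with hM
  set C : ℕ → Matrix (Fin n) (Fin n) ℝ := fun k => M * A ^ k with hC
  have hC0 : C 0 = M := by simp [hC]
  have hCk : ∀ k : ℕ, C k = A ^ k - L := by
    intro k; simp [hC, hM, Matrix.sub_mul, hLpow k]
  have hBk : ∀ k : ℕ, 1 ≤ k → B ^ k = A ^ k - L := by
    intro k hk
    induction k with
    | zero => omega
    | succ k ih =>
      rcases Nat.eq_or_lt_of_le hk with h1 | h1
      · simp [← h1, hB]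
      · have hk1 : 1 ≤ k := by omega
        rw [pow_succ, ih hk1, hB, Matrix.sub_mul, Matrix.mul_sub, Matrix.mul_sub,
          hpowL k, hLA, hLL, ← pow_succ]
        abel
  have hCB : ∀ k : ℕ, 1 ≤ k → C k = B ^ k := fun k hk => by rw [hCk k, hBk k hk]
  have hCsucc : ∀ k : ℕ, C (k + 1) = C k * A := by
    intro k; rw [hC]; simp only [pow_succ, ← mul_assoc]
  -- B ^ k tends to 0
  have hB0 : Tendsto (fun k : ℕ => B ^ k) atTop (nhds 0) := by
    have h1 : Tendsto (fun k : ℕ => A ^ k - L) atTop (nhds 0) := by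
      simpa using hL.sub (tendsto_const_nhds (x := L))
    apply h1.congr'
    filter_upwards [eventually_ge_atTop 1] with k hk
    exact (hBk k hk).symm
  -- choose m with ‖B ^ m‖ < 1
  have hBnorm : Tendsto (fun k : ℕ => ‖B ^ k‖) atTop (nhds 0) := by simpa using hB0.norm
  have hev : ∀ᶠ k in atTop, ‖B ^ k‖ < 1 := hBnorm.eventually_lt_const one_pos
  obtain ⟨m, hm⟩ := (hev.and (eventually_ge_atTop 1)).exists
  obtain ⟨hmlt, hm1⟩ := hm
  have hm0 : 0 < m := hm1
  set c : ℝ := ‖B ^ m‖ with hc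
  have hc0 : 0 ≤ c := norm_nonneg _
  have hc1 : c < 1 := hmlt
  set D : ℝ := (∑ r ∈ Finset.range m, ‖B ^ r‖) + ‖M‖ + 1 with hD
  have hD1 : 1 ≤ D := by
    have h1 : 0 ≤ ∑ r ∈ Finset.range m, ‖B ^ r‖ :=
      Finset.sum_nonneg fun r _ => norm_nonneg _
    have h2 : 0 ≤ ‖M‖ := norm_nonneg _
    simp only [hD]; linarith
  have hD0 : 0 ≤ D := by linarith
  have hrD : ∀ r : ℕ, r < m → ‖B ^ r‖ ≤ D := by
    intro r hr
    have h1 : ‖B ^ r‖ ≤ ∑ r ∈ Finset.range m, ‖B ^ r‖ :=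
      Finset.single_le_sum (f := fun r => ‖B ^ r‖) (fun i _ => norm_nonneg _)
        (Finset.mem_range.2 hr)
    have h2 : 0 ≤ ‖M‖ := norm_nonneg _
    simp only [hD]; linarith
  have hCbound : ∀ k : ℕ, ‖C k‖ ≤ D * c ^ (k / m) := by
    intro k
    rcases Nat.eq_zero_or_pos k with rfl | hk
    · rw [hC0]
      have : (0 : ℕ) / m = 0 := Nat.zero_div m
      rw [this, pow_zero, mul_one]
      simp only [hD]
      have h1 : 0 ≤ ∑ r ∈ Finset.range m, ‖B ^ r‖ :=
        Finset.sum_nonneg fun r _ => norm_nonneg _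
      linarith
    · rw [hCB k hk]
      have hsplit : B ^ k = (B ^ m) ^ (k / m) * B ^ (k % m) := by
        rw [← pow_mul, ← pow_add, Nat.div_add_mod]
      rcases Nat.eq_zero_or_pos (k / m) with hq | hq
      · rw [hq, pow_zero, mul_one]
        have hklt : k < m := by
          by_contra hge
          push_neg at hge
          have := Nat.div_le_div_right (c := m) hge
          rw [Nat.div_self hm0] at this
          omega
        have hkm : k % m = k := Nat.mod_eq_of_lt hklt
        have := hrD (k % m) (Nat.mod_lt k hm0)
        rw [hkm] at this
        exact this
      · calc ‖B ^ k‖ = ‖(B ^ m) ^ (k / m) * B ^ (k % m)‖ := by rw [← hsplit]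
          _ ≤ ‖(B ^ m) ^ (k / m)‖ * ‖B ^ (k % m)‖ := norm_mul_le _ _
          _ ≤ c ^ (k / m) * D := by
              apply mul_le_mul _ (hrD _ (Nat.mod_lt k hm0)) (norm_nonneg _)
                (by positivity)
              exact norm_pow_le' _ hq
          _ = D * c ^ (k / m) := mul_comm _ _
  -- the summable series
  set g : ℕ → Matrix (Fin n) (Fin n) ℝ := fun k => (C k)ᵀ * C k with hg
  have hgnorm : ∀ k, ‖g k‖ = ‖C k‖ * ‖C k‖ := by
    intro k
    rw [hg]
    have := Matrix.l2_opNorm_conjTranspose_mul_self (C k)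
    rwa [Matrix.conjTranspose_eq_transpose_of_trivial] at this
  have hsumD : Summable fun k : ℕ => (D * c ^ (k / m)) * (D * c ^ (k / m)) := by
    have h1 : Summable fun k : ℕ => (c * c) ^ (k / m) :=
      summable_geom_div (by positivity) (by nlinarith) m hm0
    have h2 := h1.mul_left (D * D)
    apply h2.congr
    intro k
    rw [mul_pow]
    ring
  have hgsum : Summable g := by
    apply Summable.of_norm_bounded hsumD
    intro k
    rw [hgnorm k]
    exact mul_le_mul (hCbound k) (hCbound k) (norm_nonneg _)
      (mul_nonneg hD0 (pow_nonneg hc0 _))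
  set P : Matrix (Fin n) (Fin n) ℝ := ∑' k, g k with hP
  have hPapp := fun x : Fin n → ℝ => map_tsum_matrix (mvLM x) hgsum
  have hPform := fun x : Fin n → ℝ => map_tsum_matrix (formLM x) hgsum
  have hPconj := map_tsum_matrix (conjLM A) hgsum
  have hform_term : ∀ (x : Fin n → ℝ) (k : ℕ),
      x ⬝ᵥ ((g k) *ᵥ x) = (C k *ᵥ x) ⬝ᵥ (C k *ᵥ x) := by
    intro x k
    rw [hg]
    rw [← Matrix.mulVec_mulVec, Matrix.dotProduct_mulVec, Matrix.vecMul_transpose]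
  have hPherm : P.IsHermitian := by
    rw [Matrix.IsHermitian, Matrix.conjTranspose_eq_transpose_of_trivial, hP,
      Matrix.transpose_tsum]
    congr 1
    funext k
    rw [hg]
    simp [Matrix.transpose_mul, Matrix.transpose_transpose]
  have hPpsd : P.PosSemidef := by
    refine PosSemidef.of_dotProduct_mulVec_nonneg hPherm fun x => ?_
    rw [star_trivial]
    show (0:ℝ) ≤ formLM x P
    rw [(hPform x).1]
    refine tsum_nonneg fun k => ?_
    rw [show formLM x (g k) = x ⬝ᵥ (g k *ᵥ x) from rfl, hform_term]
    exact dot_nonneg' _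
  have hgshift : ∀ k, conjLM A (g k) = g (k + 1) := by
    intro k
    show Aᵀ * g k * A = g (k + 1)
    simp only [hg]
    rw [hCsucc k]
    simp only [Matrix.transpose_mul, Matrix.mul_assoc]
  have hg0 : g 0 = Mᵀ * M := by simp only [hg]; rw [hC0]
  have hLyap : Aᵀ * P * A - P = -(Mᵀ * M) := by
    have h2 : conjLM A P = ∑' k, g (k + 1) := by
      rw [hPconj.1]; exact tsum_congr hgshift
    have h3 : (∑' k, g k) = g 0 + ∑' k, g (k + 1) := hgsum.tsum_eq_zero_add
    have h4 : Aᵀ * P * A = P - g 0 := by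
      rw [show Aᵀ * P * A = conjLM A P from rfl, h2, hP, h3]; abel
    rw [h4, hg0]; abel
  set ε : ℝ := (‖A - 1‖ ^ 2 + 1)⁻¹ with hε
  have hε0 : 0 < ε := by positivity
  have hεle : ε * ‖A - 1‖ ^ 2 ≤ 1 := by
    rw [hε]
    rw [inv_mul_le_iff₀ (by positivity)]
    nlinarith [sq_nonneg ‖A - (1 : Matrix (Fin n) (Fin n) ℝ)‖]
  set Q : Matrix (Fin n) (Fin n) ℝ := ε • (1 : Matrix (Fin n) (Fin n) ℝ) with hQdef
  have hQpd : Q.PosDef := by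
    refine PosDef.of_dotProduct_mulVec_pos ?_ ?_
    · simp [hQdef, Matrix.IsHermitian]
    · intro x hx
      rw [star_trivial, hQdef, Matrix.smul_mulVec, Matrix.one_mulVec,
        dotProduct_smul, smul_eq_mul]
      have h1 : 0 < x ⬝ᵥ x := by
        rcases lt_or_eq_of_le (dot_nonneg' x) with h | h
        · exact h
        · exact absurd (dotProduct_self_eq_zero.1 h.symm) hx
      positivity
  have hA1L : (A - 1) * L = 0 := by
    rw [Matrix.sub_mul, hAL, Matrix.one_mul, sub_self]
  have hA1M : (A - 1) * M = A - 1 := by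
    rw [hM, Matrix.mul_sub, Matrix.mul_one, hA1L, sub_zero]
  have hNid : -(Aᵀ * P * A - P + (A - 1)ᵀ * Q * (A - 1)) =
      Mᵀ * M - ε • ((A - 1)ᵀ * (A - 1)) := by
    rw [hLyap, hQdef]
    rw [Matrix.mul_smul, Matrix.mul_one, Matrix.smul_mul]
    abel
  have hNpsd : (Mᵀ * M - ε • ((A - 1)ᵀ * (A - 1))).PosSemidef := by
    refine PosSemidef.of_dotProduct_mulVec_nonneg ?_ ?_
    · rw [Matrix.IsHermitian, Matrix.conjTranspose_eq_transpose_of_trivial]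
      simp [Matrix.transpose_sub, Matrix.transpose_smul, Matrix.transpose_mul,
        Matrix.transpose_transpose]
    · intro x
      rw [star_trivial, Matrix.sub_mulVec, Matrix.smul_mulVec, dotProduct_sub,
        dotProduct_smul, smul_eq_mul]
      have e1 : x ⬝ᵥ ((Mᵀ * M) *ᵥ x) = (M *ᵥ x) ⬝ᵥ (M *ᵥ x) := by
        rw [← Matrix.mulVec_mulVec, Matrix.dotProduct_mulVec, Matrix.vecMul_transpose]
      have e2 : x ⬝ᵥ (((A - 1)ᵀ * (A - 1)) *ᵥ x) =
          ((A - 1) *ᵥ x) ⬝ᵥ ((A - 1) *ᵥ x) := by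
        rw [← Matrix.mulVec_mulVec, Matrix.dotProduct_mulVec, Matrix.vecMul_transpose]
      rw [e1, e2]
      have e3 : (A - 1) *ᵥ x = (A - 1) *ᵥ (M *ᵥ x) := by
        rw [Matrix.mulVec_mulVec, hA1M]
      rw [e3]
      have e4 := dot_mulVec_le (A - 1) (M *ᵥ x)
      have e5 := dot_nonneg' (M *ᵥ x)
      have e6 := dot_nonneg' ((A - 1) *ᵥ (M *ᵥ x))
      nlinarith
  have hker : LinearMap.ker P.mulVecLin = LinearMap.ker (A - 1).mulVecLin := by
    apply le_antisymm
    · intro x hx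
      rw [LinearMap.mem_ker, Matrix.mulVecLin_apply] at hx ⊢
      have hform0 : formLM x P = 0 := by
        show x ⬝ᵥ (P *ᵥ x) = 0
        rw [hx, dotProduct_zero]
      have hterm : ∀ k, 0 ≤ formLM x (g k) := fun k => by
        rw [show formLM x (g k) = x ⬝ᵥ (g k *ᵥ x) from rfl, hform_term]
        exact dot_nonneg' _
      have h0 : formLM x (g 0) ≤ ∑' k, formLM x (g k) :=
        (hPform x).2.le_tsum 0 fun j _ => hterm j
      rw [← (hPform x).1, hform0] at h0
      have hM0 : (M *ᵥ x) ⬝ᵥ (M *ᵥ x) ≤ 0 := by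
        calc (M *ᵥ x) ⬝ᵥ (M *ᵥ x) = formLM x (g 0) := by
              rw [show formLM x (g 0) = x ⬝ᵥ (g 0 *ᵥ x) from rfl, hform_term, hC0]
          _ ≤ 0 := h0
      have hMx : M *ᵥ x = 0 :=
        dotProduct_self_eq_zero.1 (le_antisymm hM0 (dot_nonneg' _))
      have hLx : L *ᵥ x = x := by
        rw [hM, Matrix.sub_mulVec, Matrix.one_mulVec, sub_eq_zero] at hMx
        exact hMx.symm
      rw [Matrix.sub_mulVec, Matrix.one_mulVec]
      have : A *ᵥ x = A *ᵥ (L *ᵥ x) := by rw [hLx]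
      rw [this, Matrix.mulVec_mulVec, hAL, hLx, sub_self]
    · intro x hx
      rw [LinearMap.mem_ker, Matrix.mulVecLin_apply] at hx ⊢
      have hAx : A *ᵥ x = x := by
        rw [Matrix.sub_mulVec, Matrix.one_mulVec, sub_eq_zero] at hx
        exact hx
      have hAkx : ∀ k : ℕ, A ^ k *ᵥ x = x := by
        intro k
        induction k with
        | zero => simp [Matrix.one_mulVec]
        | succ k ih => rw [pow_succ', ← Matrix.mulVec_mulVec, ih, hAx]
      have hLx : L *ᵥ x = x := by
        have h1 : Tendsto (fun k : ℕ => mvLM x (A ^ k)) atTop (nhds (mvLM x L)) :=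
          ((mvLM x).continuous_of_finiteDimensional.tendsto L).comp hL
        have h2 : (fun k : ℕ => mvLM x (A ^ k)) = fun _ => x := by
          funext k; exact hAkx k
        rw [h2] at h1
        exact (tendsto_nhds_unique h1 tendsto_const_nhds)
      have hMx : M *ᵥ x = 0 := by
        rw [hM, Matrix.sub_mulVec, Matrix.one_mulVec, hLx, sub_self]
      have hCx : ∀ k, C k *ᵥ x = 0 := by
        intro k
        show (M * A ^ k) *ᵥ x = 0
        rw [← Matrix.mulVec_mulVec, hAkx, hMx]
      have hgx : ∀ k, mvLM x (g k) = 0 := by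
        intro k
        show g k *ᵥ x = 0
        rw [hg]
        show ((C k)ᵀ * C k) *ᵥ x = 0
        rw [← Matrix.mulVec_mulVec, hCx, Matrix.mulVec_zero]
      show P *ᵥ x = 0
      rw [show P *ᵥ x = mvLM x P from rfl, (hPapp x).1]
      simp [hgx]
  have hrn := LinearMap.finrank_range_add_finrank_ker P.mulVecLin
  have hfr : Module.finrank ℝ (Fin n → ℝ) = n := by simp
  rw [hfr] at hrn
  have hkle : Module.finrank ℝ (LinearMap.ker (A - 1).mulVecLin) ≤ n := by
    have := Submodule.finrank_le (LinearMap.ker (A - 1).mulVecLin)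
    rwa [hfr] at this
  have hrank : P.rank = n - Module.finrank ℝ (LinearMap.ker (A - 1).mulVecLin) := by
    rw [Matrix.rank, ← hker]
    omega
  exact ⟨Q, P, hQpd, hPpsd, hrank, by rw [hNid]; exact hNpsd⟩

end Forward

section Backward

variable (A : Matrix (Fin n) (Fin n) ℝ)

set_option maxHeartbeats 1000000 in
lemma backward_dir (Q P : Matrix (Fin n) (Fin n) ℝ) (hQ : Q.PosDef) (hP : P.PosSemidef)
    (hrank : P.rank = n - Module.finrank ℝ (LinearMap.ker (A - 1).mulVecLin))
    (hN : (-(Aᵀ * P * A - P + (A - 1)ᵀ * Q * (A - 1))).PosSemidef) :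
    DTConvergent A := by
  classical
  have hPsymm : Pᵀ = P := by
    have := hP.1
    rwa [Matrix.IsHermitian, Matrix.conjTranspose_eq_transpose_of_trivial] at this
  have hPdot : ∀ v w : Fin n → ℝ, v ⬝ᵥ (P *ᵥ w) = (P *ᵥ v) ⬝ᵥ w := by
    intro v w
    rw [Matrix.dotProduct_mulVec]
    conv_lhs => rw [← hPsymm, Matrix.vecMul_transpose]
  have key : ∀ z : Fin n → ℝ,
      (A *ᵥ z) ⬝ᵥ (P *ᵥ (A *ᵥ z)) + ((A - 1) *ᵥ z) ⬝ᵥ (Q *ᵥ ((A - 1) *ᵥ z))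
        ≤ z ⬝ᵥ (P *ᵥ z) := by
    intro z
    have h0 := hN.dotProduct_mulVec_nonneg z
    rw [star_trivial] at h0
    have t1 : z ⬝ᵥ ((Aᵀ * P * A) *ᵥ z) = (A *ᵥ z) ⬝ᵥ (P *ᵥ (A *ᵥ z)) := by
      rw [← Matrix.mulVec_mulVec, ← Matrix.mulVec_mulVec,
        Matrix.dotProduct_mulVec (v := z), Matrix.vecMul_transpose]
    have t2 : z ⬝ᵥ (((A - 1)ᵀ * Q * (A - 1)) *ᵥ z)
        = ((A - 1) *ᵥ z) ⬝ᵥ (Q *ᵥ ((A - 1) *ᵥ z)) := by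
      rw [← Matrix.mulVec_mulVec, ← Matrix.mulVec_mulVec,
        Matrix.dotProduct_mulVec (v := z), Matrix.vecMul_transpose]
    have e : z ⬝ᵥ ((-(Aᵀ * P * A - P + (A - 1)ᵀ * Q * (A - 1))) *ᵥ z)
        = z ⬝ᵥ (P *ᵥ z) - (A *ᵥ z) ⬝ᵥ (P *ᵥ (A *ᵥ z))
          - ((A - 1) *ᵥ z) ⬝ᵥ (Q *ᵥ ((A - 1) *ᵥ z)) := by
      rw [Matrix.neg_mulVec, dotProduct_neg, Matrix.add_mulVec, Matrix.sub_mulVec,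
        dotProduct_add, dotProduct_sub, t1, t2]
      ring
    rw [e] at h0
    linarith
  obtain ⟨c, hcpos, hcQ⟩ := posdef_lower hQ
  have hfr : Module.finrank ℝ (Fin n → ℝ) = n := by simp
  have hsub : LinearMap.ker P.mulVecLin ≤ LinearMap.ker (A - 1).mulVecLin := by
    intro x hx
    rw [LinearMap.mem_ker, Matrix.mulVecLin_apply] at hx ⊢
    have hk := key x
    have h1 : 0 ≤ (A *ᵥ x) ⬝ᵥ (P *ᵥ (A *ᵥ x)) := by
      have := hP.dotProduct_mulVec_nonneg (A *ᵥ x); rwa [star_trivial] at this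
    have h2 : c * (((A - 1) *ᵥ x) ⬝ᵥ ((A - 1) *ᵥ x))
        ≤ ((A - 1) *ᵥ x) ⬝ᵥ (Q *ᵥ ((A - 1) *ᵥ x)) := hcQ _
    have h3 : x ⬝ᵥ (P *ᵥ x) = 0 := by rw [hx, dotProduct_zero]
    have h4 : ((A - 1) *ᵥ x) ⬝ᵥ ((A - 1) *ᵥ x) ≤ 0 := by nlinarith
    exact dotProduct_self_eq_zero.1 (le_antisymm h4 (dot_nonneg' _))
  have hrnP := LinearMap.finrank_range_add_finrank_ker P.mulVecLin
  rw [hfr] at hrnP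
  have hkle : Module.finrank ℝ (LinearMap.ker (A - 1).mulVecLin) ≤ n := by
    have := Submodule.finrank_le (LinearMap.ker (A - 1).mulVecLin)
    rwa [hfr] at this
  have hrankP : Matrix.rank P = Module.finrank ℝ (LinearMap.range P.mulVecLin) := rfl
  have hkerP : LinearMap.ker P.mulVecLin = LinearMap.ker (A - 1).mulVecLin := by
    apply Submodule.eq_of_le_of_finrank_eq hsub
    omega
  set K := LinearMap.ker (A - 1).mulVecLin with hK
  set W := LinearMap.range (A - 1).mulVecLin with hW
  have hKW0 : ∀ v : Fin n → ℝ, v ∈ K → v ∈ W → v = 0 := by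
    intro v hvK hvW
    obtain ⟨w, hw⟩ := hvW
    rw [Matrix.mulVecLin_apply] at hw
    have hvfix : A *ᵥ v = v := by
      have := hvK
      rw [hK, LinearMap.mem_ker, Matrix.mulVecLin_apply, Matrix.sub_mulVec,
        Matrix.one_mulVec, sub_eq_zero] at this
      exact this
    have hPv : P *ᵥ v = 0 := by
      have : v ∈ LinearMap.ker P.mulVecLin := by rw [hkerP]; exact hvK
      rwa [LinearMap.mem_ker, Matrix.mulVecLin_apply] at this
    have hAw : A *ᵥ w = w + v := by
      rw [Matrix.sub_mulVec, Matrix.one_mulVec] at hw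
      rw [← hw]; abel
    have hk := key w
    rw [hAw] at hk
    have e1 : (w + v) ⬝ᵥ (P *ᵥ (w + v)) = w ⬝ᵥ (P *ᵥ w) := by
      rw [Matrix.mulVec_add]
      rw [show P *ᵥ v = 0 from hPv, add_zero, add_dotProduct]
      have : v ⬝ᵥ (P *ᵥ w) = 0 := by rw [hPdot, hPv, zero_dotProduct]
      rw [this, add_zero]
    rw [e1] at hk
    have h2 : c * (((A - 1) *ᵥ w) ⬝ᵥ ((A - 1) *ᵥ w))
        ≤ ((A - 1) *ᵥ w) ⬝ᵥ (Q *ᵥ ((A - 1) *ᵥ w)) := hcQ _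
    rw [hw] at h2
    have hvv : v ⬝ᵥ v ≤ 0 := by
      have hq : v ⬝ᵥ (Q *ᵥ v) ≤ 0 := by
        have : ((A - 1) *ᵥ w) ⬝ᵥ (Q *ᵥ ((A - 1) *ᵥ w)) ≤ 0 := by linarith
        rwa [hw] at this
      nlinarith
    exact dotProduct_self_eq_zero.1 (le_antisymm hvv (dot_nonneg' _))
  have hdisj : K ⊓ W = ⊥ := by
    rw [eq_bot_iff]
    rintro v ⟨hv1, hv2⟩
    rw [Submodule.mem_bot]
    exact hKW0 v hv1 hv2
  have hrnA := LinearMap.finrank_range_add_finrank_ker (A - 1).mulVecLin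
  rw [hfr] at hrnA
  have hsum := Submodule.finrank_sup_add_finrank_inf_eq K W
  rw [hdisj, finrank_bot] at hsum
  rw [← hW, ← hK] at hrnA
  have hsup : K ⊔ W = ⊤ := by
    apply Submodule.eq_top_of_finrank_eq
    rw [hfr]
    omega
  have hWinv : ∀ w ∈ W, A *ᵥ w ∈ W := by
    rintro w ⟨u, rfl⟩
    rw [Matrix.mulVecLin_apply]
    refine ⟨A *ᵥ u, ?_⟩
    rw [Matrix.mulVecLin_apply, Matrix.mulVec_mulVec, Matrix.mulVec_mulVec]
    congr 1
    rw [Matrix.sub_mul, Matrix.mul_sub, Matrix.one_mul, Matrix.mul_one]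
  obtain ⟨δ, hδpos, hδ⟩ := lowbound (A - 1).mulVecLin W
    (fun w hw h0 => hKW0 w (LinearMap.mem_ker.2 h0) hw)
  intro x0
  have hx0 : x0 ∈ K ⊔ W := by rw [hsup]; exact Submodule.mem_top
  obtain ⟨u, huK, w, hwW, huw⟩ := Submodule.mem_sup.1 hx0
  have hufix : A *ᵥ u = u := by
    have := huK
    rw [hK, LinearMap.mem_ker, Matrix.mulVecLin_apply, Matrix.sub_mulVec,
      Matrix.one_mulVec, sub_eq_zero] at this
    exact this
  have hAku : ∀ k : ℕ, A ^ k *ᵥ u = u := by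
    intro k
    induction k with
    | zero => simp [Matrix.one_mulVec]
    | succ k ih => rw [pow_succ', ← Matrix.mulVec_mulVec, ih, hufix]
  set ws : ℕ → (Fin n → ℝ) := fun k => A ^ k *ᵥ w with hws
  have hws_succ : ∀ k, ws (k + 1) = A *ᵥ ws k := by
    intro k
    show A ^ (k + 1) *ᵥ w = A *ᵥ (A ^ k *ᵥ w)
    rw [pow_succ', ← Matrix.mulVec_mulVec]
  have hwsW : ∀ k, ws k ∈ W := by
    intro k
    induction k with
    | zero => simpa [hws, Matrix.one_mulVec] using hwW
    | succ k ih =>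
      rw [hws_succ k]
      exact hWinv _ ih
  set a : ℕ → ℝ := fun k => ws k ⬝ᵥ (P *ᵥ ws k) with ha
  have ha_nonneg : ∀ k, 0 ≤ a k := by
    intro k
    have := hP.dotProduct_mulVec_nonneg (ws k); rwa [star_trivial] at this
  have hstep : ∀ k, a (k + 1) + c * δ * (ws k ⬝ᵥ ws k) ≤ a k := by
    intro k
    have hk := key (ws k)
    rw [← hws_succ k] at hk
    have h2 : c * (((A - 1) *ᵥ ws k) ⬝ᵥ ((A - 1) *ᵥ ws k))
        ≤ ((A - 1) *ᵥ ws k) ⬝ᵥ (Q *ᵥ ((A - 1) *ᵥ ws k)) := hcQ _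
    have h3 : δ * (ws k ⬝ᵥ ws k) ≤ ((A - 1) *ᵥ ws k) ⬝ᵥ ((A - 1) *ᵥ ws k) := by
      have := hδ (ws k) (hwsW k)
      simpa only [Matrix.mulVecLin_apply] using this
    have h4 : 0 ≤ ws k ⬝ᵥ ws k := dot_nonneg' _
    nlinarith
  have ha_anti : Antitone a := by
    apply antitone_nat_of_succ_le
    intro k
    have h1 := hstep k
    have h2 : 0 ≤ c * δ * (ws k ⬝ᵥ ws k) := by
      have := dot_nonneg' (ws k); positivity
    linarith
  have ha_conv : Tendsto a atTop (nhds (⨅ k, a k)) :=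
    tendsto_atTop_ciInf ha_anti ⟨0, fun x ⟨k, hk⟩ => hk ▸ ha_nonneg k⟩
  have hdiff : Tendsto (fun k => a k - a (k + 1)) atTop (nhds 0) := by
    have h1 : Tendsto (fun k : ℕ => a (k + 1)) atTop (nhds (⨅ k, a k)) :=
      ha_conv.comp (tendsto_add_atTop_nat 1)
    simpa using ha_conv.sub h1
  have hdot0 : Tendsto (fun k => ws k ⬝ᵥ ws k) atTop (nhds 0) := by
    have hle : ∀ k, ws k ⬝ᵥ ws k ≤ (c * δ)⁻¹ * (a k - a (k + 1)) := by
      intro k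
      rw [le_inv_mul_iff₀ (by positivity)]
      have := hstep k
      linarith
    have h0 : Tendsto (fun k => (c * δ)⁻¹ * (a k - a (k + 1))) atTop (nhds 0) := by
      simpa using hdiff.const_mul (c * δ)⁻¹
    exact squeeze_zero (fun k => dot_nonneg' _) hle h0
  have hw0 : Tendsto ws atTop (nhds 0) := by
    apply squeeze_zero_norm (a := fun k => Real.sqrt (ws k ⬝ᵥ ws k))
      (fun k => pi_norm_le_sqrt_dot (ws k))
    have hsq : Tendsto (fun k => Real.sqrt (ws k ⬝ᵥ ws k)) atTop (nhds (Real.sqrt 0)) :=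
      (Real.continuous_sqrt.tendsto 0).comp hdot0
    simpa using hsq
  refine ⟨u, ?_⟩
  have heq : ∀ k : ℕ, A ^ k *ᵥ x0 = u + ws k := by
    intro k
    rw [← huw, Matrix.mulVec_add, hAku k]
  simp only [heq]
  simpa using tendsto_const_nhds.add hw0

end Backward

end DTProofAux

/-- the DT LTI system is convergent iff there exist `Q ≻ 0` and `P ⪰ 0`
with `rank P = n − dim ker(A − I)` such that `AᵀPA − P + (A−I)ᵀQ(A−I) ⪯ 0`. -/
theorem dt_convergent_iff_lmi_rank
    (n : ℕ) (A : Matrix (Fin n) (Fin n) ℝ) :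
    DTConvergent A ↔
      ∃ (Q P : Matrix (Fin n) (Fin n) ℝ), Q.PosDef ∧ P.PosSemidef ∧
        P.rank = n - Module.finrank ℝ (LinearMap.ker (A - 1).mulVecLin) ∧
        (-(Aᵀ * P * A - P + (A - 1)ᵀ * Q * (A - 1))).PosSemidef := by
  constructor
  · exact fun h => forward_dir A h
  · rintro ⟨Q, P, hQ, hP, hrank, hN⟩
    exact backward_dir A Q P hQ hP hrank hN
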